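/- If G is a circulant graph on n vertices, then its K_{n,n}-augmentation is circulant. Concretely, the K_{n,n}-augmentation of C_n S equals C_{2n} S̄ where S̄ = {2d : d ∈ S} ∪ {2i−1 : 1 ≤ i ≤ ⌊(n+1)/2⌋}. -/

import Mathlib

/-- The circulant graph on `ZMod n` with jump set `S`. -/
def circulantGraph (n : ℕ) (S : Set ℕ) : SimpleGraph (ZMod n) where
  Adj i j := i ≠ j ∧ ((j - i).val ∈ S ∨ (i - j).val ∈ S)
  symm := ⟨fun i j h => ⟨h.1.symm, h.2.symm⟩⟩
  loopless := ⟨fun i h => h.1 rfl⟩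

/-- The `K_{n,n}`-augmentation of a graph `G`: the join of `G` with a disjoint clone of
itself, i.e. two disjoint copies of `G` together with all edges between the two copies. -/
def knnAugmentation {V : Type*} (G : SimpleGraph V) : SimpleGraph (V ⊕ V) where
  Adj a b :=
    match a, b with
    | Sum.inl x, Sum.inl y => G.Adj x y
    | Sum.inr x, Sum.inr y => G.Adj x y
    | Sum.inl _, Sum.inr _ => True
    | Sum.inr _, Sum.inl _ => True
  symm := by
    constructor; rintro (x | x) (y | y) h <;> simp_all <;> exact h.symm
  loopless := by
    constructor; rintro (x | x) h <;> exact G.loopless.irrefl x h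

lemma circulantGraph_adj (n : ℕ) (S : Set ℕ) (i j : ZMod n) :
    (circulantGraph n S).Adj i j ↔ i ≠ j ∧ ((j - i).val ∈ S ∨ (i - j).val ∈ S) := Iff.rfl

lemma aux_sub_cast (n : ℕ) [NeZero n] (a b : ZMod n) :
    ((2 * b.val : ℕ) : ZMod (2 * n)) - ((2 * a.val : ℕ) : ZMod (2 * n))
      = ((2 * (b - a).val : ℕ) : ZMod (2 * n)) := by
  have h : ((b - a).val + a.val) ≡ b.val [MOD n] := by
    have : (((b - a).val + a.val : ℕ) : ZMod n) = (b.val : ZMod n) := by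
      push_cast
      simp [ZMod.natCast_val, ZMod.cast_id]
    exact (ZMod.natCast_eq_natCast_iff _ _ _).mp this
  have h2 : 2 * ((b - a).val + a.val) ≡ 2 * b.val [MOD 2 * n] := h.mul_left' 2
  have h3 := (ZMod.natCast_eq_natCast_iff _ _ _).mpr h2
  push_cast at h3 ⊢
  linear_combination -h3


/-- The `K_{n,n}`-augmentation of the circulant graph `C_n S` is the circulant graph
`C_{2n} S̄` where `S̄ = {2d : d ∈ S} ∪ {2i - 1 : 1 ≤ i ≤ ⌊(n+1)/2⌋}`; in particular the
`K_{n,n}`-augmentation of a circulant graph is circulant. -/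
theorem knnAugmentation_circulant
    (n : ℕ) (hn : 0 < n) (S : Set ℕ) (hS : S ⊆ Set.Icc 1 (n / 2)) :
    Nonempty (knnAugmentation (circulantGraph n S) ≃g
      circulantGraph (2 * n)
        ({e | ∃ d ∈ S, e = 2 * d} ∪ {e | ∃ i, 1 ≤ i ∧ i ≤ (n + 1) / 2 ∧ e = 2 * i - 1})) := by
  haveI : NeZero n := ⟨hn.ne'⟩
  haveI : NeZero (2 * n) := ⟨by omega⟩
  set Sb : Set ℕ :=
    ({e | ∃ d ∈ S, e = 2 * d} ∪ {e | ∃ i, 1 ≤ i ∧ i ≤ (n + 1) / 2 ∧ e = 2 * i - 1}) with hSb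
  let f : ZMod n ⊕ ZMod n → ZMod (2 * n) := fun a =>
    match a with
    | Sum.inl x => ((2 * x.val : ℕ) : ZMod (2 * n))
    | Sum.inr x => ((2 * x.val + 1 : ℕ) : ZMod (2 * n))
  have hvlt : ∀ x : ZMod n, x.val < n := fun x => ZMod.val_lt x
  have hvl : ∀ x : ZMod n, (f (Sum.inl x)).val = 2 * x.val := fun x =>
    ZMod.val_cast_of_lt (by have := hvlt x; omega)
  have hvr : ∀ x : ZMod n, (f (Sum.inr x)).val = 2 * x.val + 1 := fun x =>
    ZMod.val_cast_of_lt (by have := hvlt x; omega)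
  have hinj : Function.Injective f := by
    rintro (x | x) (y | y) h <;>
      have h2 := congrArg ZMod.val h <;>
      simp only [hvl, hvr] at h2
    · exact congrArg Sum.inl (ZMod.val_injective n (by omega))
    · omega
    · omega
    · exact congrArg Sum.inr (ZMod.val_injective n (by omega))
  have hbij : Function.Bijective f := by
    rw [Fintype.bijective_iff_injective_and_card]
    refine ⟨hinj, ?_⟩
    simp only [Fintype.card_sum, ZMod.card]
    ring
  have hevenmem : ∀ v : ℕ, (2 * v ∈ Sb ↔ v ∈ S) := by
    intro v
    constructor
    · rintro (⟨d, hd, hdv⟩ | ⟨i, hi1, hi2, hiv⟩)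
      · have : v = d := by omega
        exact this ▸ hd
      · omega
    · intro hv; exact Or.inl ⟨v, hv, rfl⟩
  have hoddmem : ∀ v : ℕ, v < n → (2 * v + 1 ∈ Sb ∨ 2 * n - (2 * v + 1) ∈ Sb) := by
    intro v hv
    rcases le_or_gt (2 * v + 1) n with h | h
    · left; right; exact ⟨v + 1, by omega, by omega, by omega⟩
    · right; right; exact ⟨n - v, by omega, by omega, by omega⟩
  have hdiff_ll : ∀ x y : ZMod n, (f (Sum.inl y) - f (Sum.inl x)).val = 2 * (y - x).val := by
    intro x y
    show (((2 * y.val : ℕ) : ZMod (2 * n)) - ((2 * x.val : ℕ) : ZMod (2 * n))).val = _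
    rw [aux_sub_cast]
    exact ZMod.val_cast_of_lt (by have := hvlt (y - x); omega)
  have hdiff_rr : ∀ x y : ZMod n, (f (Sum.inr y) - f (Sum.inr x)).val = 2 * (y - x).val := by
    intro x y
    have he : f (Sum.inr y) - f (Sum.inr x)
        = ((2 * y.val : ℕ) : ZMod (2 * n)) - ((2 * x.val : ℕ) : ZMod (2 * n)) := by
      show ((2 * y.val + 1 : ℕ) : ZMod (2 * n)) - ((2 * x.val + 1 : ℕ) : ZMod (2 * n)) = _
      push_cast
      ring
    rw [he, aux_sub_cast]
    exact ZMod.val_cast_of_lt (by have := hvlt (y - x); omega)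
  have hcast_rl : ∀ x y : ZMod n,
      f (Sum.inr y) - f (Sum.inl x) = ((2 * (y - x).val + 1 : ℕ) : ZMod (2 * n)) := by
    intro x y
    show ((2 * y.val + 1 : ℕ) : ZMod (2 * n)) - ((2 * x.val : ℕ) : ZMod (2 * n)) = _
    have := aux_sub_cast n x y
    push_cast at this ⊢
    linear_combination this
  have hdiff_rl : ∀ x y : ZMod n,
      (f (Sum.inr y) - f (Sum.inl x)).val = 2 * (y - x).val + 1 := by
    intro x y
    rw [hcast_rl]
    exact ZMod.val_cast_of_lt (by have := hvlt (y - x); omega)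
  have hdiff_lr : ∀ x y : ZMod n,
      (f (Sum.inl x) - f (Sum.inr y)).val = 2 * n - (2 * (y - x).val + 1) := by
    intro x y
    have hv := hvlt (y - x)
    have h3 : ((2 * n - (2 * (y - x).val + 1) : ℕ) : ZMod (2 * n))
        + ((2 * (y - x).val + 1 : ℕ) : ZMod (2 * n)) = 0 := by
      rw [← Nat.cast_add]
      have he : (2 * n - (2 * (y - x).val + 1)) + (2 * (y - x).val + 1) = 2 * n := by omega
      rw [he]
      exact ZMod.natCast_self (2 * n)
    have h1 : f (Sum.inl x) - f (Sum.inr y)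
        = ((2 * n - (2 * (y - x).val + 1) : ℕ) : ZMod (2 * n)) := by
      have he : f (Sum.inl x) - f (Sum.inr y) = -(f (Sum.inr y) - f (Sum.inl x)) := by ring
      rw [he, hcast_rl]
      linear_combination -h3
    rw [h1]
    exact ZMod.val_cast_of_lt (by omega)
  have hne_cross : ∀ x y : ZMod n, f (Sum.inl x) ≠ f (Sum.inr y) := by
    intro x y h
    have h2 := congrArg ZMod.val h
    rw [hvl, hvr] at h2
    omega
  refine ⟨⟨Equiv.ofBijective f hbij, ?_⟩⟩
  rintro (x | x) (y | y)
  · show (circulantGraph (2 * n) Sb).Adj (f (Sum.inl x)) (f (Sum.inl y)) ↔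
      (circulantGraph n S).Adj x y
    rw [circulantGraph_adj, circulantGraph_adj, hdiff_ll, hdiff_ll, hevenmem, hevenmem]
    constructor
    · rintro ⟨h1, h2⟩
      exact ⟨fun h => h1 (by rw [h]), h2⟩
    · rintro ⟨h1, h2⟩
      exact ⟨fun h => h1 (Sum.inl.inj (hinj h)), h2⟩
  · show (circulantGraph (2 * n) Sb).Adj (f (Sum.inl x)) (f (Sum.inr y)) ↔ True
    rw [circulantGraph_adj, hdiff_rl, hdiff_lr, iff_true]
    exact ⟨hne_cross x y, hoddmem _ (hvlt _)⟩
  · show (circulantGraph (2 * n) Sb).Adj (f (Sum.inr x)) (f (Sum.inl y)) ↔ True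
    rw [circulantGraph_adj, hdiff_lr, hdiff_rl, iff_true]
    refine ⟨fun h => hne_cross y x h.symm, ?_⟩
    exact (hoddmem _ (hvlt (x - y))).symm
  · show (circulantGraph (2 * n) Sb).Adj (f (Sum.inr x)) (f (Sum.inr y)) ↔
      (circulantGraph n S).Adj x y
    rw [circulantGraph_adj, circulantGraph_adj, hdiff_rr, hdiff_rr, hevenmem, hevenmem]
    constructor
    · rintro ⟨h1, h2⟩
      exact ⟨fun h => h1 (by rw [h]), h2⟩
    · rintro ⟨h1, h2⟩
      exact ⟨fun h => h1 (Sum.inr.inj (hinj h)), h2⟩
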